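/- Let u : ℝ → ℝ be three times continuously differentiable (ContDiff ℝ 3), let t ∈ ℝ and α > 0, and assume iteratedDeriv 3 u t ≠ 0. For h > 0 define the BDF2 value v h = ((1 + α)/(1 + 2*α)) * ((1 + α) * u t - (α^2/(1 + α)) * u (t - h/α) + h * deriv u (t + h)) and the generalized leapfrog predictor p h = u t + (1 + α) * h * (deriv u t) - α^2 * (u t - u (t - h/α)). Then (fun h => (v h - u (t + h)) / (v h - p h)) tends to (α + 1)/(3*α + 2) as h → 0 within (0, ∞). In other words, the local time error of the BDF2 step is asymptotically e_{n+1} ≈ ((αₙ + 1)/(3αₙ + 2))·(u_{n+1} − u^p_{n+1}). -/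

import Mathlib

open Filter Set Topology

/-- Limit of the difference quotient along the punctured neighborhood, shifted form. -/
lemma slope_tendsto_aux {g : ℝ → ℝ} {t m : ℝ} (hg : HasDerivAt g m t) :
    Tendsto (fun s => (g (t + s) - g t) / s) (𝓝[≠] 0) (𝓝 m) := by
  have h1 := hasDerivAt_iff_tendsto_slope.mp hg
  have hmap : Tendsto (fun s : ℝ => t + s) (𝓝[≠] (0 : ℝ)) (𝓝[≠] t) := by
    apply Tendsto.inf
    · simpa using (continuous_add_left t).tendsto (0 : ℝ)
    · refine tendsto_principal_principal.mpr ?_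
      intro s hs
      simp only [mem_compl_iff, mem_singleton_iff] at hs ⊢
      intro hc; apply hs; linarith
  have := h1.comp hmap
  refine this.congr fun s => ?_
  show slope g t (t + s) = _
  rw [slope_def_field, add_sub_cancel_left]

/-- Second-order Taylor expansion with Peano remainder (little-o form as a limit). -/
lemma taylor2_aux {f : ℝ → ℝ} (hf : ContDiff ℝ 2 f) (t : ℝ) :
    Tendsto (fun s => (f (t + s) - f t - deriv f t * s - iteratedDeriv 2 f t * s ^ 2 / 2) / s ^ 2)
      (𝓝[≠] (0 : ℝ)) (𝓝 0) := by
  have hdf : Differentiable ℝ f := hf.differentiable (by norm_num)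
  have hdf' : Differentiable ℝ (deriv f) := by
    have : ContDiff ℝ 1 (deriv f) := by
      have h2 : ContDiff ℝ ((1 : ℕ∞) + 1) f := by exact_mod_cast hf
      exact (contDiff_succ_iff_deriv.mp h2).2.2
    exact this.differentiable (by norm_num)
  have hd2 : HasDerivAt (deriv f) (iteratedDeriv 2 f t) t := by
    have : iteratedDeriv 2 f t = deriv (deriv f) t := by
      rw [show (2 : ℕ) = 1 + 1 from rfl, iteratedDeriv_succ, iteratedDeriv_one]
    rw [this]
    exact (hdf' t).hasDerivAt
  -- L'Hôpital
  apply HasDerivAt.lhopital_zero_nhdsNE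
    (f' := fun s => deriv f (t + s) - deriv f t - iteratedDeriv 2 f t * s)
    (g' := fun s => 2 * s)
  · filter_upwards with s
    have h1 : HasDerivAt (fun s : ℝ => f (t + s)) (deriv f (t + s)) s := by
      have := ((hdf (t + s)).hasDerivAt).comp s ((hasDerivAt_id s).const_add t)
      simpa [Function.comp_def] using this
    have := ((h1.sub_const (f t)).sub ((hasDerivAt_id s).const_mul (deriv f t))).sub
      (((hasDerivAt_pow 2 s).const_mul (iteratedDeriv 2 f t)).div_const 2)
    convert this using 1
    · rfl
    · rfl
    · rfl
    · norm_num <;> ring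
  · filter_upwards with s
    simpa using hasDerivAt_pow 2 s
  · filter_upwards [self_mem_nhdsWithin] with s hs
    simp only [mem_compl_iff, mem_singleton_iff] at hs
    positivity
  · have hc : Continuous fun s => f (t + s) - f t - deriv f t * s - iteratedDeriv 2 f t * s ^ 2 / 2 :=
      by fun_prop
    exact Tendsto.mono_left (by simpa using hc.tendsto 0) nhdsWithin_le_nhds
  · have : Tendsto (fun s : ℝ => s ^ 2) (𝓝 0) (𝓝 0) := by
      simpa using (continuous_pow 2).tendsto (0 : ℝ)
    exact this.mono_left nhdsWithin_le_nhds
  · have h1 := slope_tendsto_aux hd2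
    have h2 : Tendsto (fun s : ℝ =>
        ((deriv f (t + s) - deriv f t) / s - iteratedDeriv 2 f t) / 2) (𝓝[≠] (0 : ℝ))
        (𝓝 ((iteratedDeriv 2 f t - iteratedDeriv 2 f t) / 2)) :=
      ((h1.sub tendsto_const_nhds).div_const 2)
    simp only [sub_self, zero_div] at h2
    refine h2.congr' ?_
    filter_upwards [self_mem_nhdsWithin] with s hs
    simp only [mem_compl_iff, mem_singleton_iff] at hs
    field_simp

/-- Third-order Taylor expansion with Peano remainder (little-o form as a limit). -/
lemma taylor3_aux {u : ℝ → ℝ} (hu : ContDiff ℝ 3 u) (t : ℝ) :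
    Tendsto (fun s => (u (t + s) - u t - deriv u t * s - iteratedDeriv 2 u t * s ^ 2 / 2
        - iteratedDeriv 3 u t * s ^ 3 / 6) / s ^ 3)
      (𝓝[≠] (0 : ℝ)) (𝓝 0) := by
  have hdu : Differentiable ℝ u := hu.differentiable (by norm_num)
  have hdu' : ContDiff ℝ 2 (deriv u) := by
    have h2 : ContDiff ℝ ((2 : ℕ∞) + 1) u := by exact_mod_cast hu
    exact (contDiff_succ_iff_deriv.mp h2).2.2
  have key := taylor2_aux hdu' t
  have e1 : deriv (deriv u) t = iteratedDeriv 2 u t := by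
    rw [show (2 : ℕ) = 1 + 1 from rfl, iteratedDeriv_succ, iteratedDeriv_one]
  have e2 : iteratedDeriv 2 (deriv u) t = iteratedDeriv 3 u t :=
    (congrFun (iteratedDeriv_succ' (n := 2) (f := u)) t).symm
  rw [e1, e2] at key
  apply HasDerivAt.lhopital_zero_nhdsNE
    (f' := fun s => deriv u (t + s) - deriv u t - iteratedDeriv 2 u t * s
      - iteratedDeriv 3 u t * s ^ 2 / 2)
    (g' := fun s => 3 * s ^ 2)
  · filter_upwards with s
    have h1 : HasDerivAt (fun s : ℝ => u (t + s)) (deriv u (t + s)) s := by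
      have := ((hdu (t + s)).hasDerivAt).comp s ((hasDerivAt_id s).const_add t)
      simpa [Function.comp_def] using this
    have := (((h1.sub_const (u t)).sub ((hasDerivAt_id s).const_mul (deriv u t))).sub
      (((hasDerivAt_pow 2 s).const_mul (iteratedDeriv 2 u t)).div_const 2)).sub
      (((hasDerivAt_pow 3 s).const_mul (iteratedDeriv 3 u t)).div_const 6)
    convert this using 1
    · rfl
    · rfl
    · rfl
    · norm_num <;> ring
  · filter_upwards with s
    simpa using hasDerivAt_pow 3 s
  · filter_upwards [self_mem_nhdsWithin] with s hs
    simp only [mem_compl_iff, mem_singleton_iff] at hs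
    positivity
  · have hc : Continuous fun s => u (t + s) - u t - deriv u t * s
        - iteratedDeriv 2 u t * s ^ 2 / 2 - iteratedDeriv 3 u t * s ^ 3 / 6 := by fun_prop
    exact Tendsto.mono_left (by simpa using hc.tendsto 0) nhdsWithin_le_nhds
  · have : Tendsto (fun s : ℝ => s ^ 3) (𝓝 0) (𝓝 0) := by
      simpa using (continuous_pow 3).tendsto (0 : ℝ)
    exact this.mono_left nhdsWithin_le_nhds
  · have h2 := key.div_const 3
    simp only [zero_div] at h2
    refine h2.congr' ?_
    filter_upwards [self_mem_nhdsWithin] with s hs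
    simp only [mem_compl_iff, mem_singleton_iff] at hs
    rw [div_div]
    ring_nf

set_option maxHeartbeats 4000000 in
/-- The BDF2 local error is asymptotically `((α+1)/(3α+2))` times the
corrector-minus-predictor difference. -/
theorem bdf2_error_estimator_ratio (u : ℝ → ℝ) (hu : ContDiff ℝ 3 u)
    (t α : ℝ) (hα : 0 < α) (hd3 : iteratedDeriv 3 u t ≠ 0) :
    Filter.Tendsto
      (fun h : ℝ =>
        ((((1 + α) / (1 + 2 * α)) *
            ((1 + α) * u t - (α ^ 2 / (1 + α)) * u (t - h / α) + h * deriv u (t + h)))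
          - u (t + h)) /
        ((((1 + α) / (1 + 2 * α)) *
            ((1 + α) * u t - (α ^ 2 / (1 + α)) * u (t - h / α) + h * deriv u (t + h)))
          - (u t + (1 + α) * h * (deriv u t) - α ^ 2 * (u t - u (t - h / α)))))
      (nhdsWithin 0 (Set.Ioi 0))
      (nhds ((α + 1) / (3 * α + 2))) := by
  set a := u t with ha
  set b := deriv u t with hb
  set c := iteratedDeriv 2 u t with hc
  set d := iteratedDeriv 3 u t with hd
  have hα0 : α ≠ 0 := ne_of_gt hα
  have h1α : (1 + α) ≠ 0 := by positivity
  have h12α : (1 + 2 * α) ≠ 0 := by positivity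
  -- Remainder functions
  set R : ℝ → ℝ := fun s => (u (t + s) - a - b * s - c * s ^ 2 / 2 - d * s ^ 3 / 6) / s ^ 3
    with hR
  set Q : ℝ → ℝ := fun h => (deriv u (t + h) - b - c * h - d * h ^ 2 / 2) / h ^ 2 with hQ
  have hRlim : Tendsto R (𝓝[≠] (0 : ℝ)) (𝓝 0) := taylor3_aux hu t
  have hQlim : Tendsto Q (𝓝[≠] (0 : ℝ)) (𝓝 0) := by
    have hdu' : ContDiff ℝ 2 (deriv u) := by
      have h2 : ContDiff ℝ ((2 : ℕ∞) + 1) u := by exact_mod_cast hu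
      exact (contDiff_succ_iff_deriv.mp h2).2.2
    have key := taylor2_aux hdu' t
    have e1 : deriv (deriv u) t = iteratedDeriv 2 u t := by
      rw [show (2 : ℕ) = 1 + 1 from rfl, iteratedDeriv_succ, iteratedDeriv_one]
    have e2 : iteratedDeriv 2 (deriv u) t = iteratedDeriv 3 u t :=
      (congrFun (iteratedDeriv_succ' (n := 2) (f := u)) t).symm
    rw [e1, e2] at key
    exact key
  -- restrict to the right neighborhood
  have hsub : 𝓝[>] (0 : ℝ) ≤ 𝓝[≠] (0 : ℝ) :=
    nhdsWithin_mono 0 fun x hx => ne_of_gt hx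
  have hRlim' : Tendsto R (𝓝[>] (0 : ℝ)) (𝓝 0) := hRlim.mono_left hsub
  have hQlim' : Tendsto Q (𝓝[>] (0 : ℝ)) (𝓝 0) := hQlim.mono_left hsub
  -- the remainder at the previous step, composed
  have hmapneg : Tendsto (fun h : ℝ => -h / α) (𝓝[>] (0 : ℝ)) (𝓝[≠] (0 : ℝ)) := by
    rw [tendsto_nhdsWithin_iff]
    constructor
    · have h1 : Tendsto (fun h : ℝ => -h / α) (𝓝 0) (𝓝 (-0 / α)) :=
        ((continuous_neg.div_const α).tendsto 0)
      rw [neg_zero, zero_div] at h1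
      exact h1.mono_left nhdsWithin_le_nhds
    · filter_upwards [self_mem_nhdsWithin] with h hh
      simp only [mem_Ioi] at hh
      simp only [mem_compl_iff, mem_singleton_iff]
      intro hcon
      rw [div_eq_zero_iff] at hcon
      rcases hcon with hcon | hcon
      · linarith
      · exact hα0 hcon
  have hWlim : Tendsto (fun h : ℝ => R (-h / α)) (𝓝[>] (0 : ℝ)) (𝓝 0) := hRlim.comp hmapneg
  -- numerator and denominator over h^3
  set β : ℝ := (1 + α) / (1 + 2 * α) with hβ
  set L1 : ℝ := d * (1 + α) ^ 2 / (6 * α * (1 + 2 * α)) with hL1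
  set L2 : ℝ := d * ((3 * α + 2) * (α + 1)) / (6 * α * (1 + 2 * α)) with hL2
  set N : ℝ → ℝ := fun h =>
    (β * ((1 + α) * a - (α ^ 2 / (1 + α)) * u (t - h / α) + h * deriv u (t + h))) - u (t + h)
    with hN
  set D : ℝ → ℝ := fun h =>
    (β * ((1 + α) * a - (α ^ 2 / (1 + α)) * u (t - h / α) + h * deriv u (t + h)))
      - (a + (1 + α) * h * b - α ^ 2 * (a - u (t - h / α))) with hD
  have eu1 : ∀ s : ℝ, s ≠ 0 →
      u (t + s) = a + b * s + c * s ^ 2 / 2 + d * s ^ 3 / 6 + R s * s ^ 3 := by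
    intro s hs
    simp only [hR]
    rw [div_mul_cancel₀ _ (pow_ne_zero 3 hs)]
    ring
  have ev : ∀ h : ℝ, h ≠ 0 →
      deriv u (t + h) = b + c * h + d * h ^ 2 / 2 + Q h * h ^ 2 := by
    intro h hh
    simp only [hQ]
    rw [div_mul_cancel₀ _ (pow_ne_zero 2 hh)]
    ring
  have keyN : ∀ h : ℝ, h ∈ Ioi (0 : ℝ) →
      N h / h ^ 3 = L1 + β * ((α ^ 2 / (1 + α)) * (1 / α ^ 3) * R (-h / α) + Q h) - R h := by
    intro h hh
    have hh0 : h ≠ 0 := ne_of_gt hh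
    have hs0 : -h / α ≠ 0 := div_ne_zero (neg_ne_zero.mpr hh0) hα0
    have e1 : t - h / α = t + (-h / α) := by ring
    simp only [hN]
    rw [e1, eu1 (-h / α) hs0, eu1 h hh0, ev h hh0]
    simp only [hβ, hL1]
    field_simp [hh0, hα0, h1α, h12α]
    ring
  have keyD : ∀ h : ℝ, h ∈ Ioi (0 : ℝ) →
      D h / h ^ 3 = L2 + β * ((α ^ 2 / (1 + α)) * (1 / α ^ 3) * R (-h / α) + Q h)
        + α ^ 2 / α ^ 3 * R (-h / α) := by
    intro h hh
    have hh0 : h ≠ 0 := ne_of_gt hh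
    have hs0 : -h / α ≠ 0 := div_ne_zero (neg_ne_zero.mpr hh0) hα0
    have e1 : t - h / α = t + (-h / α) := by ring
    simp only [hD]
    rw [e1, eu1 (-h / α) hs0, ev h hh0]
    simp only [hβ, hL2]
    field_simp [hh0, hα0, h1α, h12α]
    ring
  have hNlim : Tendsto (fun h => N h / h ^ 3) (𝓝[>] (0 : ℝ)) (𝓝 L1) := by
    have : Tendsto (fun h : ℝ =>
        L1 + β * ((α ^ 2 / (1 + α)) * (1 / α ^ 3) * R (-h / α) + Q h) - R h)
        (𝓝[>] (0 : ℝ))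
        (𝓝 (L1 + β * ((α ^ 2 / (1 + α)) * (1 / α ^ 3) * 0 + 0) - 0)) := by
      exact (tendsto_const_nhds.add (((tendsto_const_nhds.mul hWlim).add hQlim').const_mul β)).sub
        hRlim'
    simp only [mul_zero, add_zero, sub_zero] at this
    exact this.congr' (by filter_upwards [self_mem_nhdsWithin] with h hh using (keyN h hh).symm)
  have hDlim : Tendsto (fun h => D h / h ^ 3) (𝓝[>] (0 : ℝ)) (𝓝 L2) := by
    have : Tendsto (fun h : ℝ =>
        L2 + β * ((α ^ 2 / (1 + α)) * (1 / α ^ 3) * R (-h / α) + Q h)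
          + α ^ 2 / α ^ 3 * R (-h / α))
        (𝓝[>] (0 : ℝ))
        (𝓝 (L2 + β * ((α ^ 2 / (1 + α)) * (1 / α ^ 3) * 0 + 0) + α ^ 2 / α ^ 3 * 0)) := by
      exact (tendsto_const_nhds.add
        (((tendsto_const_nhds.mul hWlim).add hQlim').const_mul β)).add
        (tendsto_const_nhds.mul hWlim)
    simp only [mul_zero, add_zero] at this
    exact this.congr' (by filter_upwards [self_mem_nhdsWithin] with h hh using (keyD h hh).symm)
  have hL2ne : L2 ≠ 0 := by
    simp only [hL2]
    apply div_ne_zero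
    · apply mul_ne_zero hd3
      apply mul_ne_zero <;> positivity
    · positivity
  have hmain := hNlim.div hDlim hL2ne
  have hfinal : L1 / L2 = (α + 1) / (3 * α + 2) := by
    rw [hL1, hL2]
    rw [div_div_div_cancel_right₀ (by positivity)]
    rw [div_eq_div_iff (by apply mul_ne_zero hd3; apply mul_ne_zero <;> positivity)
      (by positivity)]
    ring
  rw [hfinal] at hmain
  refine hmain.congr' ?_
  filter_upwards [self_mem_nhdsWithin] with h hh
  have hh0 : (h : ℝ) ^ 3 ≠ 0 := pow_ne_zero 3 (ne_of_gt (Set.mem_Ioi.mp hh))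
  show (N h / h ^ 3) / (D h / h ^ 3) = _
  rw [div_div_div_cancel_right₀ hh0]
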